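/- Let C be a cycle, A and B two disjoint vertex subsets of C, and ξ a vertex adjacent (in a supergraph G of C) to all of A ∪ B, where A ∪ {ξ} and B ∪ {ξ} are cliques of G. Let P be a path of C with one endpoint u ∈ A, the other endpoint v ∈ B, whose inner vertices are in neither A nor B nor equal to ξ, such that u is nonadjacent in G to all vertices of B∖{ξ}-side and v nonadjacent to A-side except via ξ, and the inner vertices of P induce a path in G. If P has an even number of vertices, then V(P) ∪ {ξ} induces an odd cycle of length ≥ 5 in G. -/

import Mathlib

/-- Let `ξ` be a vertex adjacent to all of `A ∪ B` (`A`, `B`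
disjoint sets not containing `ξ`), with `A ∪ {ξ}` and `B ∪ {ξ}` cliques of `G`.
Let `P = p 0, …, p (k-1)` be an induced path of `G` with `p 0 ∈ A`,
`p (k-1) ∈ B`, nonadjacent endpoints, inner vertices in neither `A` nor `B` nor
adjacent to `ξ`, and `ξ` not on `P`. If `P` has an even number `k` of vertices,
then `V(P) ∪ {ξ}` induces an odd cycle of length `k + 1 ≥ 5` in `G`. -/
theorem stmt17 {V : Type*} (G : SimpleGraph V) (ξ : V) (A B : Set V)
    (hAB : Disjoint A B) (hξA : ξ ∉ A) (hξB : ξ ∉ B)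
    (hadjA : ∀ a ∈ A, G.Adj ξ a) (hadjB : ∀ b ∈ B, G.Adj ξ b)
    (hcliqueA : G.IsClique (A ∪ {ξ})) (hcliqueB : G.IsClique (B ∪ {ξ}))
    (k : ℕ) (hk : 2 ≤ k) (hke : Even k)
    (p : Fin k → V) (hinj : Function.Injective p)
    (hu : p ⟨0, by omega⟩ ∈ A) (hv : p ⟨k - 1, by omega⟩ ∈ B)
    (huv : ¬ G.Adj (p ⟨0, by omega⟩) (p ⟨k - 1, by omega⟩))
    (hinner : ∀ i : Fin k, 0 < (i : ℕ) → (i : ℕ) < k - 1 →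
      p i ∉ A ∧ p i ∉ B)
    (hpath : ∀ i : Fin k, (h : (i : ℕ) + 1 < k) →
      G.Adj (p i) (p ⟨(i : ℕ) + 1, h⟩))
    (hindp : ∀ i j : Fin k, (i : ℕ) + 1 < (j : ℕ) →
      ¬ ((i : ℕ) = 0 ∧ (j : ℕ) = k - 1) → ¬ G.Adj (p i) (p j))
    (hξinner : ∀ i : Fin k, 0 < (i : ℕ) → (i : ℕ) < k - 1 → ¬ G.Adj ξ (p i))
    (hξnot : ∀ i, p i ≠ ξ) :
    Odd (k + 1) ∧ 5 ≤ k + 1 ∧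
      ∃ f : ZMod (k + 1) → V, Function.Injective f ∧
        (∀ i j : ZMod (k + 1), G.Adj (f i) (f j) ↔ (j = i + 1 ∨ i = j + 1)) ∧
        Set.range f = Set.range p ∪ {ξ} := by
  haveI : NeZero (k + 1) := ⟨Nat.succ_ne_zero k⟩
  have hk4 : 4 ≤ k := by
    by_contra h
    have hk2 : k = 2 := by rcases hke with ⟨m, hm⟩; omega
    apply huv
    rw [show (⟨k - 1, by omega⟩ : Fin k) = ⟨(0 : ℕ) + 1, by omega⟩ from
      Fin.mk_eq_mk.mpr (by omega)]
    exact hpath ⟨0, by omega⟩ (by simpa using by omega)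
  have hone : (1 : ZMod (k + 1)).val = 1 := by
    rw [ZMod.val_one_eq_one_mod]; exact Nat.mod_eq_of_lt (by omega)
  have hsucc : ∀ i : ZMod (k + 1), (i + 1).val = ((i.val) + 1) % (k + 1) := by
    intro i; rw [ZMod.val_add, hone]
  have hvlt : ∀ i : ZMod (k + 1), i.val < k + 1 := fun i => ZMod.val_lt i
  have hvinj : ∀ i j : ZMod (k + 1), i.val = j.val → i = j :=
    fun i j h => ZMod.val_injective _ h
  have hadj0 : G.Adj ξ (p ⟨0, by omega⟩) := hadjA _ hu
  have hadjk : G.Adj ξ (p ⟨k - 1, by omega⟩) := hadjB _ hv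
  refine ⟨⟨k / 2, by rcases hke with ⟨m, hm⟩; omega⟩, by omega, ?_⟩
  refine ⟨fun i => if h : i.val < k then p ⟨i.val, h⟩ else ξ, ?_, ?_, ?_⟩
  · intro i j hij
    by_cases hi : i.val < k <;> by_cases hj : j.val < k <;>
      simp only [hi, hj, dif_pos, dif_neg, dite_true, dite_false] at hij
    · exact hvinj _ _ (Fin.mk_eq_mk.mp (hinj hij))
    · exact absurd hij (hξnot _)
    · exact absurd hij.symm (hξnot _)
    · exact hvinj _ _ (by have := hvlt i; have := hvlt j; omega)
  · intro i j
    constructor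
    · intro hadj
      by_cases hi : i.val < k <;> by_cases hj : j.val < k <;>
        simp only [hi, hj, dif_pos, dif_neg, dite_true, dite_false] at hadj
      · -- both on path
        have hne : i.val ≠ j.val := by
          intro h
          exact G.irrefl
            (by rwa [show (⟨i.val, hi⟩ : Fin k) = ⟨j.val, hj⟩ from
              Fin.mk_eq_mk.mpr h] at hadj)
        rcases Nat.lt_or_ge i.val j.val with hlt | hge
        · rcases Nat.lt_or_ge (i.val + 1) j.val with h2 | h2
          · by_cases hc : i.val = 0 ∧ j.val = k - 1
            · exfalso; apply huv
              rwa [show (⟨0, by omega⟩ : Fin k) = ⟨i.val, hi⟩ from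
                  Fin.mk_eq_mk.mpr (by omega),
                show (⟨k - 1, by omega⟩ : Fin k) = ⟨j.val, hj⟩ from
                  Fin.mk_eq_mk.mpr (by omega)]
            · exact absurd hadj (hindp _ _ h2 hc)
          · left; apply hvinj; rw [hsucc]
            rw [show j.val = i.val + 1 from by omega]
            exact (Nat.mod_eq_of_lt (by omega)).symm
        · rcases Nat.lt_or_ge (j.val + 1) i.val with h2 | h2
          · by_cases hc : j.val = 0 ∧ i.val = k - 1
            · exfalso; apply huv
              rw [show (⟨0, by omega⟩ : Fin k) = ⟨j.val, hj⟩ from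
                  Fin.mk_eq_mk.mpr (by omega),
                show (⟨k - 1, by omega⟩ : Fin k) = ⟨i.val, hi⟩ from
                  Fin.mk_eq_mk.mpr (by omega)]
              exact hadj.symm
            · exact absurd hadj.symm (hindp _ _ h2 hc)
          · right; apply hvinj; rw [hsucc]
            rw [show i.val = j.val + 1 from by omega]
            exact (Nat.mod_eq_of_lt (by omega)).symm
      · -- i on path, j = ξ
        have hjv : j.val = k := by have := hvlt j; omega
        have hi0k : i.val = 0 ∨ i.val = k - 1 := by
          by_contra h
          push_neg at h
          exact hξinner ⟨i.val, hi⟩ (by show 0 < i.val; omega)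
            (by show i.val < k - 1; omega) hadj.symm
        rcases hi0k with h0 | hk1
        · right; apply hvinj; rw [hsucc, hjv, h0]; simp
        · left; apply hvinj
          rw [hsucc, hjv, hk1, show k - 1 + 1 = k from by omega]
          exact (Nat.mod_eq_of_lt (by omega)).symm
      · -- i = ξ, j on path
        have hiv : i.val = k := by have := hvlt i; omega
        have hj0k : j.val = 0 ∨ j.val = k - 1 := by
          by_contra h
          push_neg at h
          exact hξinner ⟨j.val, hj⟩ (by show 0 < j.val; omega)
            (by show j.val < k - 1; omega) hadj
        rcases hj0k with h0 | hk1
        · left; apply hvinj; rw [hsucc, hiv, h0]; simp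
        · right; apply hvinj
          rw [hsucc, hiv, hk1, show k - 1 + 1 = k from by omega]
          exact (Nat.mod_eq_of_lt (by omega)).symm
      · exact absurd hadj (G.irrefl)
    · intro hc
      have key : ∀ a b : ZMod (k + 1), b = a + 1 →
          G.Adj (if h : a.val < k then p ⟨a.val, h⟩ else ξ)
            (if h : b.val < k then p ⟨b.val, h⟩ else ξ) := by
        intro a b hb
        subst hb
        rcases Nat.lt_trichotomy a.val (k - 1) with h1 | h1 | h1
        · have hb' : (a + 1).val = a.val + 1 := by
            rw [hsucc]; exact Nat.mod_eq_of_lt (by omega)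
          rw [dif_pos (by omega : a.val < k), dif_pos (by omega : (a + 1).val < k)]
          have := hpath ⟨a.val, by omega⟩ (by simpa using by omega)
          convert this using 2
          exact Fin.mk_eq_mk.mpr (by simpa using hb')
        · have hb' : (a + 1).val = k := by
            rw [hsucc, h1, show k - 1 + 1 = k from by omega]
            exact Nat.mod_eq_of_lt (by omega)
          rw [dif_pos (by omega : a.val < k), dif_neg (by omega : ¬ (a + 1).val < k)]
          rw [show (⟨a.val, by omega⟩ : Fin k) = ⟨k - 1, by omega⟩ from
            Fin.mk_eq_mk.mpr h1]
          exact hadjk.symm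
        · have hav : a.val = k := by have := hvlt a; omega
          have hb' : (a + 1).val = 0 := by rw [hsucc, hav]; simp
          rw [dif_neg (by omega : ¬ a.val < k), dif_pos (by omega : (a + 1).val < k)]
          rw [show (⟨(a + 1).val, by omega⟩ : Fin k) = ⟨0, by omega⟩ from
            Fin.mk_eq_mk.mpr hb']
          exact hadj0
      rcases hc with h | h
      · exact key i j h
      · exact (key j i h).symm
  · ext x
    simp only [Set.mem_range, Set.mem_union, Set.mem_singleton_iff]
    constructor
    · rintro ⟨i, hi⟩
      by_cases h : i.val < k
      · left; exact ⟨⟨i.val, h⟩, by rw [← hi]; simp [h]⟩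
      · right; rw [← hi]; simp [h]
    · rintro (⟨i, hi⟩ | hx)
      · refine ⟨(i.val : ZMod (k + 1)), ?_⟩
        have hval : ((i.val : ZMod (k + 1))).val = i.val := by
          rw [ZMod.val_natCast]; exact Nat.mod_eq_of_lt (by omega)
        rw [dif_pos (by rw [hval]; exact i.isLt), ← hi]
        congr 1
        exact Fin.mk_eq_mk.mpr hval
      · refine ⟨(k : ZMod (k + 1)), ?_⟩
        have hval : ((k : ZMod (k + 1))).val = k := by
          rw [ZMod.val_natCast]; exact Nat.mod_eq_of_lt (by omega)
        rw [dif_neg (by omega), hx]
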